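/- arXiv:1003.4612 — 9 statements merged into one kernel-verified Lean document; each statement's English description precedes it below -/
import Mathlib

section
/- Let u be a linear functional on polynomials satisfying the discrete distributional equation Δ(φu) = ψu. Then the shifted functional v = E⁺(φu), defined by ⟨E⁺w, p⟩ = ⟨w, E⁻p⟩ with (E⁻p)(x) = p(x−1), satisfies the distributional equation Δ(φ·v) = (Δφ + E⁺ψ)·v, i.e., Δ(φ·E⁺(φu)) = (Δφ + E⁺ψ)·E⁺(φu). -/
open Polynomial

/-- If Δ(φu) = ψu, then the shifted functional v = E⁺(φu), given by
⟨v, p⟩ = ⟨u, φ·(E⁻p)⟩, satisfies Δ(φ·v) = (Δφ + E⁺ψ)·v, i.e.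
−⟨v, φ·∇p⟩ = ⟨v, (Δφ + E⁺ψ)·p⟩ for every polynomial p. -/
theorem shifted_functional_distributional (u : Polynomial ℝ →ₗ[ℝ] ℝ)
    (φ ψ : Polynomial ℝ)
    (h : ∀ p : Polynomial ℝ, -(u (φ * (p - p.comp (X - C 1)))) = u (ψ * p)) :
    ∀ p : Polynomial ℝ,
      -(u (φ * ((φ * (p - p.comp (X - C 1))).comp (X - C 1)))) =
        u (φ * (((φ.comp (X + C 1) - φ + ψ.comp (X + C 1)) * p).comp (X - C 1))) := by
  intro p
  have h2 := h (φ * p.comp (X - C 1))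
  have hX : (X + C (1:ℝ)).comp (X - C 1) = X := by
    simp [add_comp]
  have e1 : φ * ((φ * (p - p.comp (X - C 1))).comp (X - C 1)) =
      φ * (φ.comp (X - C 1)) * (p.comp (X - C 1)) -
      φ * (φ.comp (X - C 1)) * ((p.comp (X - C 1)).comp (X - C 1)) := by
    simp only [mul_comp, sub_comp]; ring
  have e2 : φ * (((φ.comp (X + C 1) - φ + ψ.comp (X + C 1)) * p).comp (X - C 1)) =
      φ * φ * p.comp (X - C 1) - φ * (φ.comp (X - C 1)) * p.comp (X - C 1) +
      ψ * (φ * p.comp (X - C 1)) := by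
    simp only [mul_comp, sub_comp, add_comp, comp_assoc, hX, comp_X]; ring
  have e3 : φ * (φ * p.comp (X - C 1) - (φ * p.comp (X - C 1)).comp (X - C 1)) =
      φ * φ * p.comp (X - C 1) -
      φ * (φ.comp (X - C 1)) * ((p.comp (X - C 1)).comp (X - C 1)) := by
    simp only [mul_comp]; ring
  rw [e1, e2]
  rw [e3] at h2
  simp only [map_sub, map_add] at h2 ⊢
  linarith
end

section
/- Let u be a linear functional on polynomials of the form ⟨u, p⟩ = ∫ p w for a positive weight (more generally, a positive-definite functional with associated inner product ⟨p, r⟩ = ⟨u, pr⟩). Suppose u satisfies D(φu) = ψu with polynomials φ, ψ and let σ = max{deg φ − 2, deg ψ − 1}. If (p_n) is the sequence of monic orthogonal polynomials with respect to u, then for all n, m with m + σ < n, one has ⟨u₁, p'_{n+1}·x^m⟩ = 0 where u₁ = φu; i.e., the sequence (p'_{n+1}) is quasi-orthogonal of order at most σ with respect to φu. -/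
open Polynomial

lemma key_orth (u : Polynomial ℝ →ₗ[ℝ] ℝ) (p : ℕ → Polynomial ℝ)
    (hmonic : ∀ n, (p n).Monic) (hdeg : ∀ n, (p n).natDegree = n)
    (horth : ∀ n m, n ≠ m → u (p n * p m) = 0) :
    ∀ d k, d < k → ∀ q : Polynomial ℝ, q.natDegree ≤ d → u (q * p k) = 0 := by
  intro d
  induction d with
  | zero =>
    intro k hk q hq
    have hp0 : p 0 = 1 :=
      (Polynomial.Monic.natDegree_eq_zero (hmonic 0)).mp (hdeg 0)
    have hq' : q = C (q.coeff 0) := Polynomial.eq_C_of_natDegree_le_zero hq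
    have : q * p k = q.coeff 0 • (p 0 * p k) := by
      rw [hp0, one_mul, Polynomial.smul_eq_C_mul, ← hq']
    rw [this, map_smul, horth 0 k (by omega), smul_zero]
  | succ d ih =>
    intro k hk q hq
    set c := q.coeff (d+1) with hc
    have hpd : (p (d+1)).coeff (d+1) = 1 := by
      have := (hmonic (d+1)).coeff_natDegree
      rwa [hdeg] at this
    have hr : (q - C c * p (d+1)).natDegree ≤ d := by
      apply Polynomial.natDegree_le_iff_coeff_eq_zero.mpr
      intro i hi
      rcases eq_or_lt_of_le (Nat.succ_le_of_lt hi) with h | h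
      · simp [coeff_sub, coeff_C_mul, ← h, hpd, hc]
      · rw [coeff_sub, coeff_C_mul,
          coeff_eq_zero_of_natDegree_lt (lt_of_le_of_lt hq h),
          coeff_eq_zero_of_natDegree_lt (by rw [hdeg]; exact h)]
        ring
    have hsplit : q * p k = (q - C c * p (d+1)) * p k + c • (p (d+1) * p k) := by
      rw [Polynomial.smul_eq_C_mul]; ring
    rw [hsplit, map_add, map_smul, ih k (by omega) _ hr,
      horth (d+1) k (by omega), smul_zero, add_zero]

/-- Let u be a quasi-definite linear functional with monic orthogonal polynomial
sequence (p_n), satisfying D(φu) = ψu, and let σ = max{deg φ − 2, deg ψ − 1}.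
Then ⟨φu, p'_{n+1}·x^m⟩ = 0 whenever m + σ < n: the derivatives (p'_{n+1}) are
quasi-orthogonal of order at most σ with respect to u₁ = φu. -/
theorem derivatives_quasi_orthogonal (u : Polynomial ℝ →ₗ[ℝ] ℝ)
    (p : ℕ → Polynomial ℝ) (φ ψ : Polynomial ℝ)
    (hmonic : ∀ n, (p n).Monic) (hdeg : ∀ n, (p n).natDegree = n)
    (horth : ∀ n m, n ≠ m → u (p n * p m) = 0)
    (hqd : ∀ n, u (p n * p n) ≠ 0)
    (heq : ∀ r : Polynomial ℝ, -(u (φ * derivative r)) = u (ψ * r)) :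
    ∀ n m : ℕ, m + max (φ.natDegree - 2) (ψ.natDegree - 1) < n →
      u (φ * derivative (p (n + 1)) * X ^ m) = 0 := by
  intro n m hσ
  set σ := max (φ.natDegree - 2) (ψ.natDegree - 1) with hσdef
  have key := key_orth u p hmonic hdeg horth
  have h1 := heq (p (n+1) * X ^ m)
  have hder : derivative (p (n+1) * X ^ m)
      = derivative (p (n+1)) * X ^ m + p (n+1) * (C (m : ℝ) * X ^ (m-1)) := by
    rw [derivative_mul, derivative_X_pow]
  rw [hder] at h1
  have hexp : φ * (derivative (p (n+1)) * X ^ m + p (n+1) * (C (m:ℝ) * X ^ (m-1)))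
      = φ * derivative (p (n+1)) * X ^ m + (φ * C (m:ℝ) * X ^ (m-1)) * p (n+1) := by
    ring
  rw [hexp, map_add] at h1
  -- second term on LHS vanishes
  have h2 : u ((φ * C (m:ℝ) * X ^ (m-1)) * p (n+1)) = 0 := by
    rcases Nat.eq_zero_or_pos m with hm | hm
    · simp [hm]
    · apply key n (n+1) (Nat.lt_succ_self n)
      calc (φ * C (m:ℝ) * X ^ (m-1)).natDegree
          ≤ (φ * C (m:ℝ)).natDegree + (X ^ (m-1) : Polynomial ℝ).natDegree :=
            natDegree_mul_le
        _ ≤ φ.natDegree + 0 + (m-1) := by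
            gcongr
            · exact le_trans natDegree_mul_le (by simp)
            · exact le_of_eq (natDegree_X_pow _)
        _ ≤ n := by
            have hφ : φ.natDegree ≤ σ + 2 := by
              have : φ.natDegree - 2 ≤ σ := le_max_left _ _
              omega
            omega
  -- RHS vanishes
  have h3 : u (ψ * (p (n+1) * X ^ m)) = 0 := by
    have : ψ * (p (n+1) * X ^ m) = (ψ * X ^ m) * p (n+1) := by ring
    rw [this]
    apply key n (n+1) (Nat.lt_succ_self n)
    calc (ψ * X ^ m).natDegree ≤ ψ.natDegree + m :=
          natDegree_mul_le.trans (by simp)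
      _ ≤ n := by
          have hψ : ψ.natDegree ≤ σ + 1 := by
            have : ψ.natDegree - 1 ≤ σ := le_max_right _ _
            omega
          omega
  rw [h3, h2, add_zero] at h1
  linarith [h1]
end

section
/- Let u be a positive-definite linear functional on real polynomials satisfying the differential distributional equation D(φu) = ψu with φ̃ = φ, ψ̃ = ψ polynomials. Define the Sobolev inner product ⟨p, r⟩_S = ⟨u, pr⟩ + λ⟨u, p'r'⟩ with λ ≥ 0, and the operator 𝒥 := φ·I + λ(φ' − ψ)·d/dx − λφ·d²/dx². Then for all polynomials p, r: ⟨φp, r⟩_S = ⟨u, p·𝒥r⟩. -/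
open Polynomial

/-- Let u be positive-definite with D(φu) = ψu, let λ ≥ 0, and define
⟨p, r⟩_S = ⟨u, pr⟩ + λ⟨u, p'r'⟩ and 𝒥r = φr + λ(φ' − ψ)r' − λφr''.
Then ⟨φp, r⟩_S = ⟨u, p·𝒥r⟩ for all polynomials p, r. -/
theorem sobolev_J_identity (u : Polynomial ℝ →ₗ[ℝ] ℝ) (φ ψ : Polynomial ℝ)
    (lam : ℝ) (hlam : 0 ≤ lam)
    (hpos : ∀ q : Polynomial ℝ, q ≠ 0 → 0 < u (q * q))
    (heq : ∀ r : Polynomial ℝ, -(u (φ * derivative r)) = u (ψ * r)) :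
    ∀ p r : Polynomial ℝ,
      u (φ * p * r) + lam * u (derivative (φ * p) * derivative r) =
        u (p * (φ * r + C lam * (derivative φ - ψ) * derivative r
            - C lam * φ * derivative (derivative r))) := by
  intro p r
  have h := heq (p * derivative r)
  have hsmul : ∀ x : Polynomial ℝ, u (C lam * x) = lam * u x := fun x => by
    rw [← smul_eq_C_mul, map_smul, smul_eq_mul]
  have h2 : u (φ * (derivative p * derivative r))
      + u (φ * (p * derivative (derivative r))) = -u (ψ * (p * derivative r)) := by
    rw [derivative_mul, mul_add, map_add] at h; linarith
  have expand : p * (φ * r + C lam * (derivative φ - ψ) * derivative r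
      - C lam * φ * derivative (derivative r))
      = φ * p * r + C lam * (derivative φ * (p * derivative r))
        - C lam * (ψ * (p * derivative r))
        - C lam * (φ * (p * derivative (derivative r))) := by ring
  have e : derivative (φ * p) * derivative r
      = φ * (derivative p * derivative r) + derivative φ * (p * derivative r) := by
    rw [derivative_mul]; ring
  rw [expand, map_sub, map_sub, map_add, hsmul, hsmul, hsmul, e, map_add]
  linear_combination lam * h2
end

section
/- Let u be a linear functional on real polynomials satisfying D(φu) = ψu (derivative case), and define the Sobolev bilinear form ⟨p, r⟩_S = ⟨u, pr⟩ + λ⟨u, p'r'⟩ and the operator 𝒥r = φr + λ(φ' − ψ)r' − λφr''. Then ⟨(ψ − φ')p, r⟩_S = ⟨Du, p·𝒥r⟩ for all polynomials p, r, where ⟨Du, f⟩ = −⟨u, f'⟩. -/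
open Polynomial

/-- Let u satisfy D(φu) = ψu, with ⟨p, r⟩_S = ⟨u, pr⟩ + λ⟨u, p'r'⟩ and
𝒥r = φr + λ(φ' − ψ)r' − λφr''. Then ⟨(ψ − φ')p, r⟩_S = ⟨Du, p·𝒥r⟩
for all polynomials p, r, where ⟨Du, f⟩ = −⟨u, f'⟩. -/
theorem sobolev_J_derivative_identity (u : Polynomial ℝ →ₗ[ℝ] ℝ)
    (φ ψ : Polynomial ℝ) (lam : ℝ) (hlam : 0 ≤ lam)
    (heq : ∀ r : Polynomial ℝ, -(u (φ * derivative r)) = u (ψ * r)) :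
    ∀ p r : Polynomial ℝ,
      u ((ψ - derivative φ) * p * r)
        + lam * u (derivative ((ψ - derivative φ) * p) * derivative r) =
      -(u (derivative (p * (φ * r + C lam * (derivative φ - ψ) * derivative r
          - C lam * φ * derivative (derivative r))))) := by
  intro p r
  have h1 : ∀ q : Polynomial ℝ, u (ψ * q) + u (φ * derivative q) = 0 := by
    intro q; have := heq q; linarith
  have key : (ψ - derivative φ) * p * r
      + lam • (derivative ((ψ - derivative φ) * p) * derivative r)
      + derivative (p * (φ * r + C lam * (derivative φ - ψ) * derivative r
          - C lam * φ * derivative (derivative r)))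
      = (ψ * (p * r) + φ * derivative (p * r))
        + lam • (ψ * (-(p * derivative (derivative r)))
          + φ * derivative (-(p * derivative (derivative r)))) := by
    simp only [Polynomial.smul_eq_C_mul, derivative_mul, derivative_sub, derivative_add,
      derivative_neg, derivative_C, mul_comm, mul_assoc, mul_left_comm]
    ring
  have h2 := congrArg u key
  simp only [map_add, map_smul, smul_eq_mul] at h2
  have h3 := h1 (p * r)
  have h4 := h1 (-(p * derivative (derivative r)))
  simp only [derivative_neg, mul_neg, map_neg] at h2 h4
  rw [h4, mul_zero] at h2
  linarith
end

section
/- Let u be a linear functional on real polynomials satisfying D(φu) = ψu, let λ ≥ 0 and define the Sobolev bilinear form ⟨p, r⟩_S = ⟨u, pr⟩ + λ⟨u, p'r'⟩ and the operator 𝒥r = φr + λ(φ' − ψ)r' − λφr''. Then 𝒥 is symmetric with respect to ⟨·,·⟩_S: for all polynomials p, r one has ⟨𝒥p, r⟩_S = ⟨p, 𝒥r⟩_S. -/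
open Polynomial

/-- Let u satisfy D(φu) = ψu, λ ≥ 0, ⟨p, r⟩_S = ⟨u, pr⟩ + λ⟨u, p'r'⟩,
𝒥r = φr + λ(φ' − ψ)r' − λφr''. Then 𝒥 is symmetric with respect to ⟨·,·⟩_S:
⟨𝒥p, r⟩_S = ⟨p, 𝒥r⟩_S for all polynomials p, r. -/
theorem J_symmetric (u : Polynomial ℝ →ₗ[ℝ] ℝ) (φ ψ : Polynomial ℝ)
    (lam : ℝ) (hlam : 0 ≤ lam)
    (heq : ∀ r : Polynomial ℝ, -(u (φ * derivative r)) = u (ψ * r)) :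
    ∀ p r : Polynomial ℝ,
      (fun a b : Polynomial ℝ => u (a * b) + lam * u (derivative a * derivative b))
        (φ * p + C lam * (derivative φ - ψ) * derivative p
          - C lam * φ * derivative (derivative p)) r =
      (fun a b : Polynomial ℝ => u (a * b) + lam * u (derivative a * derivative b))
        p (φ * r + C lam * (derivative φ - ψ) * derivative r
          - C lam * φ * derivative (derivative r)) := by
  intro p r
  simp only []
  have hC : ∀ x : Polynomial ℝ, u (C lam * x) = lam * u x := by
    intro x
    rw [← smul_eq_C_mul, map_smul, smul_eq_mul]
  set q1 : Polynomial ℝ := derivative p * r - p * derivative r with hq1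
  set q2 : Polynomial ℝ := derivative (derivative p) * derivative r
      - derivative p * derivative (derivative r) with hq2
  -- first component
  have key1 :
      u ((φ * p + C lam * (derivative φ - ψ) * derivative p
          - C lam * φ * derivative (derivative p)) * r)
        - u (p * (φ * r + C lam * (derivative φ - ψ) * derivative r
          - C lam * φ * derivative (derivative r)))
        = lam * u (derivative φ * q1) := by
    have harg :
        (φ * p + C lam * (derivative φ - ψ) * derivative p
          - C lam * φ * derivative (derivative p)) * r
        - p * (φ * r + C lam * (derivative φ - ψ) * derivative r
          - C lam * φ * derivative (derivative r))
        = C lam * (derivative φ * q1 - (ψ * q1 + φ * derivative q1)) := by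
      have : derivative q1 = derivative (derivative p) * r
          - p * derivative (derivative r) := by
        simp [hq1, derivative_mul]
        ring
      rw [this, hq1]
      ring
    rw [← map_sub, harg, hC, map_sub, map_add, ← heq q1]
    ring
  -- second component
  have key2 :
      u (derivative (φ * p + C lam * (derivative φ - ψ) * derivative p
          - C lam * φ * derivative (derivative p)) * derivative r)
        - u (derivative p * derivative (φ * r + C lam * (derivative φ - ψ) * derivative r
          - C lam * φ * derivative (derivative r)))
        = - u (derivative φ * q1) := by
    have harg :
        derivative (φ * p + C lam * (derivative φ - ψ) * derivative p
          - C lam * φ * derivative (derivative p)) * derivative r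
        - derivative p * derivative (φ * r + C lam * (derivative φ - ψ) * derivative r
          - C lam * φ * derivative (derivative r))
        = - (derivative φ * q1) - C lam * (ψ * q2 + φ * derivative q2) := by
      have hdq2 : derivative q2 = derivative (derivative (derivative p)) * derivative r
          - derivative p * derivative (derivative (derivative r)) := by
        simp [hq2, derivative_mul]
        ring
      simp only [derivative_sub, derivative_add, derivative_mul, derivative_C, zero_mul, mul_zero, add_zero, zero_add]
      rw [hdq2, hq1, hq2]
      ring
    rw [← map_sub, harg, map_sub, hC, map_add, ← heq q2, map_neg]
    ring
  linear_combination key1 + lam * key2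
end

section
/- Let u be positive-definite with monic orthogonal polynomials (p_n), assume D(φu) = ψu with σ = max{deg φ − 2, deg ψ − 1}, let H = max{deg ψ − 1, deg φ}, define the Sobolev inner product ⟨p,r⟩_S = ⟨u, pr⟩ + λ⟨u, p'r'⟩ with λ > 0, let (Q_n) be the monic orthogonal polynomials with respect to ⟨·,·⟩_S, and let 𝒥r = φr + λ(φ'−ψ)r' − λφr''. Then for n ≥ H, the polynomial φ·p_n lies in the span of {Q_{n−H}, Q_{n−H+1}, …, Q_{n+deg φ}}; that is, its Fourier coefficients ⟨φ p_n, Q_ν⟩_S / ⟨Q_ν, Q_ν⟩_S vanish for ν < n − H. -/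
open Polynomial

/-- If `r` has degree at most `d < n`, then `u (p n * r) = 0` for a monic
orthogonal sequence `p`. -/
theorem orth_low_degree (u : Polynomial ℝ →ₗ[ℝ] ℝ) (p : ℕ → Polynomial ℝ)
    (hpmonic : ∀ n, (p n).Monic) (hpdeg : ∀ n, (p n).natDegree = n)
    (hporth : ∀ n m, n ≠ m → u (p n * p m) = 0) :
    ∀ d : ℕ, ∀ r : Polynomial ℝ, r.natDegree ≤ d → ∀ n, d < n → u (p n * r) = 0 := by
  intro d
  induction d with
  | zero =>
    intro r hr n hn
    have hrC : r = C (r.coeff 0) := Polynomial.eq_C_of_natDegree_le_zero hr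
    have hp0 : p 0 = 1 := by
      have hm := hpmonic 0
      have h0 := hpdeg 0
      exact hm.natDegree_eq_zero.mp h0
    have : p n * r = r.coeff 0 • (p n * p 0) := by
      rw [hp0, hrC]; simp [Polynomial.smul_eq_C_mul]; ring
    rw [this, map_smul, hporth n 0 (by omega), smul_zero]
  | succ d ih =>
    intro r hr n hn
    set c := r.coeff (d + 1) with hc
    have hsd : (r - C c * p (d + 1)).natDegree ≤ d := by
      apply Polynomial.natDegree_le_iff_coeff_eq_zero.mpr
      intro m hm
      rcases eq_or_lt_of_le (Nat.succ_le_of_lt hm) with h | h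
      · have hpc : (p (d + 1)).coeff (d + 1) = 1 := by
          have := (hpmonic (d + 1)).leadingCoeff
          rwa [Polynomial.leadingCoeff, hpdeg (d + 1)] at this
        simp [← h, coeff_sub, coeff_C_mul, hpc, hc]
      · have h1 : r.coeff m = 0 :=
          Polynomial.coeff_eq_zero_of_natDegree_lt (lt_of_le_of_lt hr h)
        have h2 : (p (d + 1)).coeff m = 0 := by
          apply Polynomial.coeff_eq_zero_of_natDegree_lt
          rw [hpdeg]; exact h
        simp [coeff_sub, coeff_C_mul, h1, h2]
    have hsplit : p n * r = p n * (r - C c * p (d + 1)) + c • (p n * p (d + 1)) := by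
      simp [Polynomial.smul_eq_C_mul]; ring
    rw [hsplit, map_add, map_smul, ih _ hsd n (by omega),
      hporth n (d + 1) (by omega), smul_zero, add_zero]

/-- In the semiclassical Sobolev setting, for n ≥ H the polynomial φ·p_n lies in
the span of Q_{n−H}, …, Q_{n+deg φ}: its Sobolev–Fourier coefficients against Q_ν
vanish when ν + H < n, where H = max{deg ψ − 1, deg φ}. -/
theorem phi_pn_expansion (u : Polynomial ℝ →ₗ[ℝ] ℝ) (φ ψ : Polynomial ℝ)
    (lam : ℝ) (hlam : 0 < lam)
    (hpos : ∀ q : Polynomial ℝ, q ≠ 0 → 0 < u (q * q))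
    (heq : ∀ r : Polynomial ℝ, -(u (φ * derivative r)) = u (ψ * r))
    (p Q : ℕ → Polynomial ℝ)
    (hpmonic : ∀ n, (p n).Monic) (hpdeg : ∀ n, (p n).natDegree = n)
    (hporth : ∀ n m, n ≠ m → u (p n * p m) = 0)
    (hQmonic : ∀ n, (Q n).Monic) (hQdeg : ∀ n, (Q n).natDegree = n)
    (hQorth : ∀ n m, n ≠ m →
      u (Q n * Q m) + lam * u (derivative (Q n) * derivative (Q m)) = 0) :
    ∀ n ν : ℕ, max (ψ.natDegree - 1) φ.natDegree ≤ n →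
      ν + max (ψ.natDegree - 1) φ.natDegree < n →
      u (φ * p n * Q ν) + lam * u (derivative (φ * p n) * derivative (Q ν)) = 0 := by
  intro n ν hHn hνn
  set H := max (ψ.natDegree - 1) φ.natDegree with hH
  -- the "Sobolev operator" applied to Q ν
  set J : Polynomial ℝ :=
    φ * Q ν + C lam * ((derivative φ - ψ) * derivative (Q ν))
      - C lam * (φ * derivative (derivative (Q ν))) with hJdef
  -- polynomial identity (integration by parts, before applying u)
  have hid : φ * p n * Q ν + C lam * (derivative (φ * p n) * derivative (Q ν))
      = p n * J + C lam * (ψ * (p n * derivative (Q ν)))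
        + C lam * (φ * derivative (p n * derivative (Q ν))) := by
    simp only [hJdef, derivative_mul]
    ring
  have hCl : ∀ x : Polynomial ℝ, u (C lam * x) = lam * u x := by
    intro x
    rw [← Polynomial.smul_eq_C_mul, map_smul, smul_eq_mul]
  have happ : u (φ * p n * Q ν) + lam * u (derivative (φ * p n) * derivative (Q ν))
      = u (p n * J) + lam * u (ψ * (p n * derivative (Q ν)))
        + lam * u (φ * derivative (p n * derivative (Q ν))) := by
    have := congrArg u hid
    simpa [map_add, hCl] using this
  -- degree bound for J
  have hdQ : (derivative (Q ν)).natDegree ≤ ν - 1 := by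
    have := Polynomial.natDegree_derivative_le (Q ν)
    rwa [hQdeg ν] at this
  have hddQ : (derivative (derivative (Q ν))).natDegree ≤ ν - 1 - 1 := by
    refine (Polynomial.natDegree_derivative_le _).trans ?_
    exact Nat.sub_le_sub_right hdQ 1
  have hJdeg : J.natDegree ≤ H + ν := by
    refine (Polynomial.natDegree_sub_le _ _).trans (max_le ?_ ?_)
    · refine (Polynomial.natDegree_add_le _ _).trans (max_le ?_ ?_)
      · refine (Polynomial.natDegree_mul_le).trans ?_
        rw [hQdeg ν]
        have : φ.natDegree ≤ H := le_max_right _ _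
        omega
      · refine (Polynomial.natDegree_C_mul_le _ _).trans ?_
        rcases Nat.eq_zero_or_pos ν with hν0 | hνpos
        · -- ν = 0 : Q ν is constant so its derivative is 0
          have hQ1 : Q ν = 1 := by
            have := (hQmonic ν).natDegree_eq_zero.mp (by rw [hQdeg]; omega)
            exact this
          simp [hQ1]
        · refine (Polynomial.natDegree_mul_le).trans ?_
          have h1 : (derivative φ - ψ).natDegree ≤ max (φ.natDegree - 1) ψ.natDegree :=
            (Polynomial.natDegree_sub_le _ _).trans
              (max_le_max (Polynomial.natDegree_derivative_le φ) le_rfl)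
          have h2 : max (φ.natDegree - 1) ψ.natDegree ≤ H + 1 := by
            refine max_le ?_ ?_
            · have : φ.natDegree ≤ H := le_max_right _ _
              omega
            · have : ψ.natDegree - 1 ≤ H := le_max_left _ _
              omega
          have := add_le_add h1 hdQ
          omega
    · refine (Polynomial.natDegree_C_mul_le _ _).trans ?_
      refine (Polynomial.natDegree_mul_le).trans ?_
      have : φ.natDegree ≤ H := le_max_right _ _
      omega
  have hJzero : u (p n * J) = 0 :=
    orth_low_degree u p hpmonic hpdeg hporth (H + ν) J hJdeg n (by omega)
  have hpear := heq (p n * derivative (Q ν))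
  rw [happ, hJzero]
  linear_combination (-lam) * hpear
end

section
/- Let u be positive-definite satisfying D(φu) = ψu, with monic orthogonal polynomials (p_n) and Sobolev orthogonal polynomials (Q_n) with respect to ⟨p,r⟩_S = ⟨u, pr⟩ + λ⟨u, p'r'⟩, λ > 0. Let H = max{deg ψ − 1, deg φ} and 𝒥r = φr + λ(φ'−ψ)r' − λφr''. Then for n ≥ deg φ, the polynomial 𝒥Q_n lies in the span of {p_{n−deg φ}, …, p_{n+H}}: the coefficients ⟨u, p_ν · 𝒥Q_n⟩ / ⟨u, p_ν²⟩ vanish for ν < n − deg φ. -/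
open Polynomial

/-- In the semiclassical Sobolev setting, for n ≥ deg φ the polynomial 𝒥Q_n lies
in the span of p_{n−deg φ}, …, p_{n+H}: its coefficients ⟨u, p_ν·𝒥Q_n⟩/⟨u, p_ν²⟩
vanish when ν + deg φ < n, where 𝒥r = φr + λ(φ'−ψ)r' − λφr''. -/
theorem J_Qn_expansion_in_pn (u : Polynomial ℝ →ₗ[ℝ] ℝ) (φ ψ : Polynomial ℝ)
    (lam : ℝ) (hlam : 0 < lam)
    (hpos : ∀ q : Polynomial ℝ, q ≠ 0 → 0 < u (q * q))
    (heq : ∀ r : Polynomial ℝ, -(u (φ * derivative r)) = u (ψ * r))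
    (p Q : ℕ → Polynomial ℝ)
    (hpmonic : ∀ n, (p n).Monic) (hpdeg : ∀ n, (p n).natDegree = n)
    (hporth : ∀ n m, n ≠ m → u (p n * p m) = 0)
    (hQmonic : ∀ n, (Q n).Monic) (hQdeg : ∀ n, (Q n).natDegree = n)
    (hQorth : ∀ n m, n ≠ m →
      u (Q n * Q m) + lam * u (derivative (Q n) * derivative (Q m)) = 0) :
    ∀ n ν : ℕ, φ.natDegree ≤ n → ν + φ.natDegree < n →
      u (p ν * (φ * Q n + C lam * (derivative φ - ψ) * derivative (Q n)
          - C lam * φ * derivative (derivative (Q n)))) = 0 := by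
  intro n ν hφn hlt
  have uC : ∀ (c : ℝ) (x : Polynomial ℝ), u (C c * x) = c * u x := by
    intro c x
    rw [← smul_eq_C_mul, map_smul, smul_eq_mul]
  -- Key identity: ⟨u, pp · 𝒥 r⟩ = ⟨u, (φ pp) r⟩ + λ ⟨u, (φ pp)' r'⟩
  have key : ∀ r pp : Polynomial ℝ,
      u (pp * (φ * r + C lam * (derivative φ - ψ) * derivative r
          - C lam * φ * derivative (derivative r)))
      = u ((φ * pp) * r) + lam * u (derivative (φ * pp) * derivative r) := by
    intro r pp
    have hpoly : pp * (φ * r + C lam * (derivative φ - ψ) * derivative r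
          - C lam * φ * derivative (derivative r))
        = ((φ * pp) * r + C lam * (derivative (φ * pp) * derivative r))
          + C lam * (-(φ * derivative (pp * derivative r))
              - ψ * (pp * derivative r)) := by
      rw [derivative_mul, derivative_mul]
      ring
    have hz : u (-(φ * derivative (pp * derivative r))
        - ψ * (pp * derivative r)) = 0 := by
      rw [map_sub, map_neg, heq (pp * derivative r)]
      ring
    rw [hpoly, map_add, map_add, uC, uC, hz, mul_zero, add_zero]
  rw [key]
  -- Sobolev orthogonality of low-degree polynomials against Q n
  have sob : ∀ k, ∀ q : Polynomial ℝ, q.natDegree ≤ k → k < n →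
      u (q * Q n) + lam * u (derivative q * derivative (Q n)) = 0 := by
    intro k
    induction k with
    | zero =>
      intro q hq hkn
      have hq0 : q = C (q.coeff 0) := (Polynomial.eq_C_of_natDegree_le_zero hq)
      have hQ0 : Q 0 = 1 := by
        have := (hQmonic 0).natDegree_eq_zero.mp (hQdeg 0)
        exact this
      have : q = C (q.coeff 0) * Q 0 := by rw [hQ0, mul_one]; exact hq0
      rw [this, derivative_C_mul, mul_assoc, uC, mul_assoc, uC]
      have := hQorth 0 n (by omega)
      calc q.coeff 0 * u (Q 0 * Q n)
            + lam * (q.coeff 0 * u (derivative (Q 0) * derivative (Q n)))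
          = q.coeff 0 * (u (Q 0 * Q n)
            + lam * u (derivative (Q 0) * derivative (Q n))) := by ring
        _ = 0 := by rw [this, mul_zero]
    | succ k ih =>
      intro q hq hkn
      set c := q.coeff (k + 1) with hc
      set q2 := q - C c * Q (k + 1) with hq2
      have hdeg2 : q2.natDegree ≤ k := by
        rw [Polynomial.natDegree_le_iff_coeff_eq_zero]
        intro m hm
        rcases lt_or_eq_of_le (Nat.succ_le_of_lt hm) with h | h
        · have h1 : q.coeff m = 0 := by
            apply Polynomial.coeff_eq_zero_of_natDegree_lt
            exact lt_of_le_of_lt hq h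
          have h2 : (Q (k + 1)).coeff m = 0 := by
            apply Polynomial.coeff_eq_zero_of_natDegree_lt
            rw [hQdeg]; exact h
          simp [hq2, h1, h2]
        · subst h
          have h2 : (Q (k + 1)).coeff (k + 1) = 1 := by
            have := (hQmonic (k + 1)).coeff_natDegree
            rwa [hQdeg] at this
          simp [hq2, h2, hc]
      have hqeq : q = q2 + C c * Q (k + 1) := by rw [hq2]; ring
      have hB2 := ih q2 hdeg2 (Nat.lt_of_succ_lt hkn)
      have hBQ := hQorth (k + 1) n (by omega)
      calc u (q * Q n) + lam * u (derivative q * derivative (Q n))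
          = (u (q2 * Q n) + lam * u (derivative q2 * derivative (Q n)))
            + c * (u (Q (k + 1) * Q n)
              + lam * u (derivative (Q (k + 1)) * derivative (Q n))) := by
            rw [hqeq]
            rw [derivative_add, derivative_mul, derivative_C, zero_mul, zero_add]
            rw [add_mul, add_mul, map_add, map_add]
            rw [mul_assoc (C c), uC, mul_assoc (C c), uC]
            ring
        _ = 0 := by rw [hB2, hBQ]; ring
  apply sob (ν + φ.natDegree)
  · calc (φ * p ν).natDegree ≤ φ.natDegree + (p ν).natDegree :=
        Polynomial.natDegree_mul_le
      _ = ν + φ.natDegree := by rw [hpdeg]; ring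
  · exact hlt
end

section
/- Let u be positive-definite satisfying D(φu) = ψu, with Sobolev orthogonal polynomials (Q_n) for ⟨p,r⟩_S = ⟨u, pr⟩ + λ⟨u, p'r'⟩, λ > 0, H = max{deg ψ − 1, deg φ}, and 𝒥r = φr + λ(φ'−ψ)r' − λφr''. Then for n ≥ H, the polynomial 𝒥Q_n lies in the span of {Q_{n−H}, …, Q_{n+H}}: its Sobolev-Fourier coefficients ⟨𝒥Q_n, Q_ν⟩_S / ⟨Q_ν, Q_ν⟩_S vanish for ν < n − H. -/
open Polynomial

/-- The operator 𝒥. -/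
noncomputable def Jop (φ ψ : Polynomial ℝ) (lam : ℝ) (p : Polynomial ℝ) : Polynomial ℝ :=
  φ * p + C lam * (derivative φ - ψ) * derivative p - C lam * φ * derivative (derivative p)

lemma Jop_sym (u : Polynomial ℝ →ₗ[ℝ] ℝ) (φ ψ : Polynomial ℝ) (lam : ℝ)
    (heq : ∀ r : Polynomial ℝ, -(u (φ * derivative r)) = u (ψ * r))
    (p r : Polynomial ℝ) :
    u (Jop φ ψ lam p * r) + lam * u (derivative (Jop φ ψ lam p) * derivative r)
      = u (p * Jop φ ψ lam r) + lam * u (derivative p * derivative (Jop φ ψ lam r)) := by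
  have hC : ∀ (c : ℝ) (x : Polynomial ℝ), c * u x = u (C c * x) := fun c x => by
    rw [← smul_eq_C_mul, map_smul, smul_eq_mul]
  have key : ∀ q : Polynomial ℝ, u (ψ * q + φ * derivative q) = 0 := fun q => by
    have h := heq q; rw [map_add]; linarith
  have h1 := key (derivative p * r - p * derivative r)
  have h2 := key (derivative (derivative p) * derivative r
    - derivative p * derivative (derivative r))
  rw [hC, hC, ← map_add, ← map_add]
  have hpoly : Jop φ ψ lam p * r + C lam * (derivative (Jop φ ψ lam p) * derivative r)
      = (p * Jop φ ψ lam r + C lam * (derivative p * derivative (Jop φ ψ lam r)))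
        - C lam * (ψ * (derivative p * r - p * derivative r)
            + φ * derivative (derivative p * r - p * derivative r))
        - C lam * (C lam * (ψ * (derivative (derivative p) * derivative r
              - derivative p * derivative (derivative r))
            + φ * derivative (derivative (derivative p) * derivative r
              - derivative p * derivative (derivative r)))) := by
    simp only [Jop, derivative_mul, derivative_add, derivative_sub, derivative_C_mul, derivative_C, zero_mul, mul_zero, add_zero, zero_add]
    ring
  rw [hpoly, map_sub, map_sub, ← hC, ← hC, ← hC, h1, h2]
  ring

lemma orth_aux (u : Polynomial ℝ →ₗ[ℝ] ℝ) (lam : ℝ) (Q : ℕ → Polynomial ℝ)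
    (hQmonic : ∀ n, (Q n).Monic) (hQdeg : ∀ n, (Q n).natDegree = n)
    (hQorth : ∀ n m, n ≠ m →
      u (Q n * Q m) + lam * u (derivative (Q n) * derivative (Q m)) = 0) :
    ∀ d : ℕ, ∀ p : Polynomial ℝ, p.natDegree ≤ d → ∀ n, d < n →
      u (Q n * p) + lam * u (derivative (Q n) * derivative p) = 0 := by
  intro d
  induction d using Nat.strong_induction_on with
  | _ d IH =>
    intro p hp n hn
    by_cases hp0 : p = 0
    · simp [hp0]
    have hcoef : (Q d).coeff d = 1 := by
      have := (hQmonic d).coeff_natDegree; rwa [hQdeg] at this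
    set c := p.coeff d with hc
    have hCmul : ∀ (a : ℝ) (x : Polynomial ℝ), u (C a * x) = a * u x := fun a x => by
      rw [← smul_eq_C_mul, map_smul, smul_eq_mul]
    have hQd : u (Q n * Q d) + lam * u (derivative (Q n) * derivative (Q d)) = 0 :=
      hQorth n d (by omega)
    have hstep : u (Q n * p) + lam * u (derivative (Q n) * derivative p)
        = c * (u (Q n * Q d) + lam * u (derivative (Q n) * derivative (Q d)))
          + (u (Q n * (p - C c * Q d))
            + lam * u (derivative (Q n) * derivative (p - C c * Q d))) := by
      have e1 : Q n * p = C c * (Q n * Q d) + Q n * (p - C c * Q d) := by ring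
      have e2 : derivative (Q n) * derivative p
          = C c * (derivative (Q n) * derivative (Q d))
            + derivative (Q n) * derivative (p - C c * Q d) := by
        simp only [derivative_sub, derivative_C_mul]; ring
      rw [e1, e2, map_add, map_add, hCmul, hCmul]; ring
    rw [hstep, hQd]
    have hrdeg : (p - C c * Q d).natDegree ≤ d :=
      (natDegree_sub_le _ _).trans (max_le hp ((natDegree_C_mul_le _ _).trans (le_of_eq (hQdeg d))))
    have hrc : (p - C c * Q d).coeff d = 0 := by
      simp [coeff_sub, coeff_C_mul, hcoef, hc]
    rcases eq_or_ne (p - C c * Q d) 0 with h0 | h0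
    · simp [h0]
    · have hlt : (p - C c * Q d).natDegree < d := by
        rcases lt_or_eq_of_le hrdeg with h | h
        · exact h
        · exfalso
          exact h0 (leadingCoeff_eq_zero.mp (by rw [leadingCoeff, h]; exact hrc))
      have := IH _ hlt _ le_rfl n (lt_trans hlt hn)
      rw [this]; ring

lemma Jop_deg (φ ψ : Polynomial ℝ) (lam : ℝ) (Q : ℕ → Polynomial ℝ)
    (hQdeg : ∀ n, (Q n).natDegree = n) (ν : ℕ) :
    (Jop φ ψ lam (Q ν)).natDegree ≤ ν + max (ψ.natDegree - 1) φ.natDegree := by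
  set H := max (ψ.natDegree - 1) φ.natDegree with hH
  have hφ : φ.natDegree ≤ H := le_max_right _ _
  have hψ : ψ.natDegree ≤ H + 1 := by
    have := le_max_left (ψ.natDegree - 1) φ.natDegree; omega
  have t1 : (φ * Q ν).natDegree ≤ ν + H := by
    refine (natDegree_mul_le).trans ?_; rw [hQdeg]; omega
  have t3 : (C lam * φ * derivative (derivative (Q ν))).natDegree ≤ ν + H := by
    have a := natDegree_derivative_le (Q ν)
    have b := natDegree_derivative_le (derivative (Q ν))
    rw [hQdeg] at a
    refine natDegree_mul_le.trans ?_
    have : (C lam * φ).natDegree ≤ H := (natDegree_C_mul_le _ _).trans hφ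
    omega
  have t2 : (C lam * (derivative φ - ψ) * derivative (Q ν)).natDegree ≤ ν + H := by
    by_cases hν : ν = 0
    · subst hν
      have h0 : Q 0 = C ((Q 0).coeff 0) := eq_C_of_natDegree_eq_zero (hQdeg 0)
      rw [h0, derivative_C, mul_zero, natDegree_zero]; omega
    · have hd : (derivative (Q ν)).natDegree ≤ ν - 1 := by
        have := natDegree_derivative_le (Q ν); rwa [hQdeg] at this
      have hfs : (C lam * (derivative φ - ψ)).natDegree ≤ H + 1 := by
        refine (natDegree_C_mul_le _ _).trans ((natDegree_sub_le _ _).trans ?_)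
        have := natDegree_derivative_le φ
        omega
      refine natDegree_mul_le.trans ?_
      omega
  exact (natDegree_sub_le _ _).trans
    (max_le ((natDegree_add_le _ _).trans (max_le t1 t2)) t3)

/-- In the semiclassical Sobolev setting, for n ≥ H the polynomial 𝒥Q_n lies in
the span of Q_{n−H}, …, Q_{n+H}: its Sobolev–Fourier coefficients against Q_ν
vanish when ν + H < n, where H = max{deg ψ − 1, deg φ} and
𝒥r = φr + λ(φ'−ψ)r' − λφr''. -/
theorem J_Qn_expansion_in_Qn (u : Polynomial ℝ →ₗ[ℝ] ℝ) (φ ψ : Polynomial ℝ)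
    (lam : ℝ) (hlam : 0 < lam)
    (hpos : ∀ q : Polynomial ℝ, q ≠ 0 → 0 < u (q * q))
    (heq : ∀ r : Polynomial ℝ, -(u (φ * derivative r)) = u (ψ * r))
    (Q : ℕ → Polynomial ℝ)
    (hQmonic : ∀ n, (Q n).Monic) (hQdeg : ∀ n, (Q n).natDegree = n)
    (hQorth : ∀ n m, n ≠ m →
      u (Q n * Q m) + lam * u (derivative (Q n) * derivative (Q m)) = 0) :
    ∀ n ν : ℕ, max (ψ.natDegree - 1) φ.natDegree ≤ n →
      ν + max (ψ.natDegree - 1) φ.natDegree < n →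
      (fun a b : Polynomial ℝ => u (a * b) + lam * u (derivative a * derivative b))
        (φ * Q n + C lam * (derivative φ - ψ) * derivative (Q n)
          - C lam * φ * derivative (derivative (Q n))) (Q ν) = 0 := by
  intro n ν _ hν
  show u (Jop φ ψ lam (Q n) * Q ν)
      + lam * u (derivative (Jop φ ψ lam (Q n)) * derivative (Q ν)) = 0
  rw [Jop_sym u φ ψ lam heq (Q n) (Q ν)]
  exact orth_aux u lam Q hQmonic hQdeg hQorth
    (ν + max (ψ.natDegree - 1) φ.natDegree) _ (Jop_deg φ ψ lam Q hQdeg ν) n hν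
end

section
/- In the setting of the previous statement (classical-type case), the Sobolev squared norms satisfy 𝐝_n² = d_n² + (λn² + δ̃_n(δ̃_n − f_{n−1}))·d²_{n−1} + ε̃_n(ε̃_n − e_{n−2} − f_{n−1}(δ̃_{n−1} − f_{n−2}))·d²_{n−2} for n ≥ 3, where f_{n−1} and e_{n−2} are the coefficients in the expansion p_n^{[−1]} = Q_n + f_{n−1}Q_{n−1} + e_{n−2}Q_{n−2}. -/
open Polynomial


private lemma deg_diff_lt' {a b : Polynomial ℝ} {m : ℕ} (ha : a.natDegree ≤ m) (hb : b.natDegree ≤ m)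
    (h : a.coeff m = b.coeff m) : (a - b).degree < (m : WithBot ℕ) := by
  rw [degree_lt_iff_coeff_zero]
  intro j hj
  rcases eq_or_lt_of_le hj with rfl | hj'
  · simp [coeff_sub, h]
  · rw [coeff_sub, coeff_eq_zero_of_natDegree_lt (lt_of_le_of_lt ha hj'),
      coeff_eq_zero_of_natDegree_lt (lt_of_le_of_lt hb hj'), sub_zero]

private lemma vanish_of_degree_lt' (L : Polynomial ℝ →ₗ[ℝ] ℝ) (p : ℕ → Polynomial ℝ)
    (hmon : ∀ n, (p n).Monic) (hdeg : ∀ n, (p n).natDegree = n)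
    (n : ℕ) (hL : ∀ m, m < n → L (p m) = 0) :
    ∀ q : Polynomial ℝ, q.degree < (n : WithBot ℕ) → L q = 0 := by
  have hsum : ∀ q : Polynomial ℝ, L q = ∑ j ∈ q.support, q.coeff j * L (X ^ j) := by
    intro q
    conv_lhs => rw [q.as_sum_support]
    rw [map_sum]
    refine Finset.sum_congr rfl fun j hj => ?_
    rw [← C_mul_X_pow_eq_monomial, ← smul_eq_C_mul, map_smul, smul_eq_mul]
  have hX : ∀ k, k < n → L (X ^ k) = 0 := by
    intro k
    induction k using Nat.strong_induction_on with
    | _ k ih =>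
      intro hk
      have hck : (p k).coeff k = 1 := by
        have := (hmon k).coeff_natDegree; rwa [hdeg] at this
      have hdlt : ((X : Polynomial ℝ) ^ k - p k).degree < (k : WithBot ℕ) := by
        apply deg_diff_lt'
        · exact natDegree_X_pow_le k
        · exact (hdeg k).le
        · simp [coeff_X_pow, hck]
      have h0 : L ((X : Polynomial ℝ) ^ k - p k) = 0 := by
        rw [hsum]
        refine Finset.sum_eq_zero fun j hj => ?_
        have hjk : j < k := by
          have h1 := le_degree_of_ne_zero (mem_support_iff.mp hj)
          have h2 := lt_of_le_of_lt h1 hdlt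
          exact_mod_cast h2
        rw [ih j hjk (hjk.trans hk), mul_zero]
      have h1 : L ((X : Polynomial ℝ) ^ k) - L (p k) = 0 := by
        rw [← map_sub]; exact h0
      rw [hL k hk, sub_zero] at h1
      exact h1
  intro q hq
  rw [hsum]
  refine Finset.sum_eq_zero fun j hj => ?_
  have hjn : j < n := by
    have h1 := le_degree_of_ne_zero (mem_support_iff.mp hj)
    have h2 := lt_of_le_of_lt h1 hq
    exact_mod_cast h2
  rw [hX j hjn, mul_zero]

/-- In the classical Sobolev setting, the Sobolev squared norms satisfy
𝐝_n² = d_n² + (λn² + δ̃_n(δ̃_n − f_{n−1}))d²_{n−1}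
      + ε̃_n(ε̃_n − e_{n−2} − f_{n−1}(δ̃_{n−1} − f_{n−2}))d²_{n−2} for n ≥ 3. -/
theorem sobolev_norm_recurrence (u : Polynomial ℝ →ₗ[ℝ] ℝ)
    (lam : ℝ) (hlam : 0 < lam)
    (hpos : ∀ q : Polynomial ℝ, q ≠ 0 → 0 < u (q * q))
    (p Q pm1 : ℕ → Polynomial ℝ) (δ ε f e : ℕ → ℝ)
    (hpmonic : ∀ n, (p n).Monic) (hpdeg : ∀ n, (p n).natDegree = n)
    (hporth : ∀ n m, n ≠ m → u (p n * p m) = 0)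
    (hQmonic : ∀ n, (Q n).Monic) (hQdeg : ∀ n, (Q n).natDegree = n)
    (hQorth : ∀ n m, n ≠ m →
      u (Q n * Q m) + lam * u (derivative (Q n) * derivative (Q m)) = 0)
    (hm1monic : ∀ n, (pm1 n).Monic) (hm1deg : ∀ n, (pm1 n).natDegree = n)
    (hexp : ∀ n, 2 ≤ n → pm1 n = p n + C (δ n) * p (n - 1) + C (ε n) * p (n - 2))
    (hder : ∀ n, 2 ≤ n → derivative (pm1 n) = C (n : ℝ) * p (n - 1))
    (hQexp : ∀ n, 2 ≤ n →
      pm1 n = Q n + C (f (n - 1)) * Q (n - 1) + C (e (n - 2)) * Q (n - 2)) :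
    ∀ n, 3 ≤ n →
      u (Q n * Q n) + lam * u (derivative (Q n) * derivative (Q n)) =
        u (p n * p n)
          + (lam * (n : ℝ) ^ 2 + δ n * (δ n - f (n - 1))) * u (p (n - 1) * p (n - 1))
          + ε n * (ε n - e (n - 2) - f (n - 1) * (δ (n - 1) - f (n - 2)))
              * u (p (n - 2) * p (n - 2)) := by
  -- basic facts
  have hC : ∀ (c : ℝ) (x : Polynomial ℝ), u (C c * x) = c * u x := by
    intro c x; rw [← smul_eq_C_mul, map_smul, smul_eq_mul]
  have expand3 : ∀ (a b c d : Polynomial ℝ) (x y : ℝ),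
      u (a * (b + C x * c + C y * d)) = u (a * b) + x * u (a * c) + y * u (a * d) := by
    intro a b c d x y
    rw [mul_add, mul_add, map_add, map_add, mul_left_comm a (C x), mul_left_comm a (C y),
      hC, hC]
  have uorth : ∀ (m : ℕ) (q : Polynomial ℝ), q.degree < (m : WithBot ℕ) → u (p m * q) = 0 := by
    intro m
    refine vanish_of_degree_lt' (u.comp (LinearMap.mulLeft ℝ (p m))) p hpmonic hpdeg m ?_
    intro j hj
    simpa using hporth m j (Nat.ne_of_gt hj)
  have cp : ∀ m, (p m).coeff m = 1 := by
    intro m; have := (hpmonic m).coeff_natDegree; rwa [hpdeg] at this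
  have cQ : ∀ m, (Q m).coeff m = 1 := by
    intro m; have := (hQmonic m).coeff_natDegree; rwa [hQdeg] at this
  have degQ : ∀ j, (Q j).degree = (j : WithBot ℕ) := by
    intro j; rw [degree_eq_natDegree (hQmonic j).ne_zero, hQdeg]
  have uQp : ∀ m, u (p m * Q m) = u (p m * p m) := by
    intro m
    have h := uorth m (Q m - p m) (deg_diff_lt' (hQdeg m).le (hpdeg m).le (by rw [cp, cQ]))
    rw [mul_sub, map_sub, sub_eq_zero] at h
    exact h
  have uQlow : ∀ m j, j < m → u (p m * Q j) = 0 := by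
    intro m j hjm
    exact uorth m (Q j) (by rw [degQ]; exact_mod_cast hjm)
  have dQ : ∀ m : ℕ, 1 ≤ m →
      u (p (m - 1) * derivative (Q m)) = (m : ℝ) * u (p (m - 1) * p (m - 1)) := by
    intro m hm
    have h1 : (derivative (Q m)).natDegree ≤ m - 1 := by
      have := natDegree_derivative_le (Q m); rwa [hQdeg] at this
    have h2 : (C (m : ℝ) * p (m - 1)).natDegree ≤ m - 1 := by
      have := natDegree_C_mul_le (m : ℝ) (p (m - 1)); rwa [hpdeg] at this
    have h3 : (derivative (Q m)).coeff (m - 1) = (C (m : ℝ) * p (m - 1)).coeff (m - 1) := by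
      rw [coeff_derivative, coeff_C_mul, cp, Nat.sub_add_cancel hm, cQ, one_mul,
        Nat.cast_sub hm]
      push_cast
      ring
    have h := uorth (m - 1) (derivative (Q m) - C (m : ℝ) * p (m - 1)) (deg_diff_lt' h1 h2 h3)
    rw [mul_sub, map_sub, sub_eq_zero] at h
    rw [h, mul_left_comm, hC]
  -- key expansions specialized
  intro n hn
  obtain ⟨k, rfl⟩ : ∃ k, n = k + 3 := ⟨n - 3, by omega⟩
  have h31 : k + 3 - 1 = k + 2 := by omega
  have h32 : k + 3 - 2 = k + 1 := by omega
  have h21 : k + 2 - 1 = k + 1 := by omega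
  have h22 : k + 2 - 2 = k := by omega
  rw [h31, h32]
  set N : ℕ := k + 3 with hN
  -- specialized expansion hypotheses
  have hex : pm1 N = p N + C (δ N) * p (k + 2) + C (ε N) * p (k + 1) := by
    have := hexp N (by omega); rwa [h31, h32] at this
  have hQx : pm1 N = Q N + C (f (k + 2)) * Q (k + 2) + C (e (k + 1)) * Q (k + 1) := by
    have := hQexp N (by omega); rwa [h31, h32] at this
  have hQx2 : pm1 (k + 2) = Q (k + 2) + C (f (k + 1)) * Q (k + 1) + C (e k) * Q k := by
    have := hQexp (k + 2) (by omega); rwa [h21, h22] at this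
  have hex2 : pm1 (k + 2) = p (k + 2) + C (δ (k + 2)) * p (k + 1) + C (ε (k + 2)) * p k := by
    have := hexp (k + 2) (by omega); rwa [h21, h22] at this
  have hd : derivative (pm1 N) = C ((N : ℕ) : ℝ) * p (k + 2) := by
    have := hder N (by omega); rwa [h31] at this
  set d2 : ℝ := u (p (k + 2) * p (k + 2)) with hd2
  set d1 : ℝ := u (p (k + 1) * p (k + 1)) with hd1
  -- u (p (k+2) * pm1 N) = δ N * d2
  have A1 : u (p (k + 2) * pm1 N) = δ N * d2 := by
    rw [hex, expand3, hporth (k + 2) N (by omega), hporth (k + 2) (k + 1) (by omega)]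
    ring
  have A2 : u (p (k + 1) * pm1 N) = ε N * d1 := by
    rw [hex, expand3, hporth (k + 1) N (by omega), hporth (k + 1) (k + 2) (by omega)]
    ring
  have A3 : u (p (k + 1) * pm1 (k + 2)) = δ (k + 2) * d1 := by
    rw [hex2, expand3, hporth (k + 1) (k + 2) (by omega), hporth (k + 1) k (by omega)]
    ring
  -- u (p (k+2) * Q N) = (δ N - f (k+2)) * d2
  have B1 : u (p (k + 2) * pm1 N) =
      u (p (k + 2) * Q N) + f (k + 2) * u (p (k + 2) * Q (k + 2))
        + e (k + 1) * u (p (k + 2) * Q (k + 1)) := by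
    rw [hQx, expand3]
  have C1 : u (p (k + 2) * Q N) = (δ N - f (k + 2)) * d2 := by
    rw [uQp (k + 2), uQlow (k + 2) (k + 1) (by omega), A1] at B1
    linarith
  have B2 : u (p (k + 1) * pm1 (k + 2)) =
      u (p (k + 1) * Q (k + 2)) + f (k + 1) * u (p (k + 1) * Q (k + 1))
        + e k * u (p (k + 1) * Q k) := by
    rw [hQx2, expand3]
  have C2 : u (p (k + 1) * Q (k + 2)) = (δ (k + 2) - f (k + 1)) * d1 := by
    rw [uQp (k + 1), uQlow (k + 1) k (by omega), A3] at B2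
    linarith
  have B3 : u (p (k + 1) * pm1 N) =
      u (p (k + 1) * Q N) + f (k + 2) * u (p (k + 1) * Q (k + 2))
        + e (k + 1) * u (p (k + 1) * Q (k + 1)) := by
    rw [hQx, expand3]
  have C3 : u (p (k + 1) * Q N) =
      (ε N - e (k + 1) - f (k + 2) * (δ (k + 2) - f (k + 1))) * d1 := by
    rw [uQp (k + 1), C2, A2] at B3
    linarith
  -- Sobolev expansion
  have hQxd : derivative (pm1 N) = derivative (Q N) + C (f (k + 2)) * derivative (Q (k + 2))
      + C (e (k + 1)) * derivative (Q (k + 1)) := by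
    rw [hQx]; simp [derivative_add, derivative_C_mul]
  have G1 : u (Q N * pm1 N) = u (Q N * Q N) + f (k + 2) * u (Q N * Q (k + 2))
      + e (k + 1) * u (Q N * Q (k + 1)) := by
    rw [hQx, expand3]
  have G2 : u (derivative (Q N) * derivative (pm1 N)) =
      u (derivative (Q N) * derivative (Q N))
        + f (k + 2) * u (derivative (Q N) * derivative (Q (k + 2)))
        + e (k + 1) * u (derivative (Q N) * derivative (Q (k + 1))) := by
    conv_lhs => rw [hQxd]
    rw [expand3]
  have G3 : u (Q N * pm1 N) = u (Q N * p N) + δ N * u (Q N * p (k + 2))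
      + ε N * u (Q N * p (k + 1)) := by
    rw [hex, expand3]
  have G4 : u (derivative (Q N) * derivative (pm1 N)) =
      ((N : ℕ) : ℝ) * u (derivative (Q N) * p (k + 2)) := by
    rw [hd, mul_left_comm, hC]
  have G5 : u (derivative (Q N) * p (k + 2)) = ((N : ℕ) : ℝ) * d2 := by
    rw [mul_comm]
    have := dQ N (by omega); rwa [h31] at this
  have G6 : u (Q N * p N) = u (p N * p N) := by rw [mul_comm]; exact uQp N
  have G7 : u (Q N * p (k + 2)) = (δ N - f (k + 2)) * d2 := by rw [mul_comm]; exact C1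
  have G8 : u (Q N * p (k + 1)) =
      (ε N - e (k + 1) - f (k + 2) * (δ (k + 2) - f (k + 1))) * d1 := by
    rw [mul_comm]; exact C3
  have hQQ1 := hQorth N (k + 2) (by omega)
  have hQQ2 := hQorth N (k + 1) (by omega)
  have cast2 : ((N : ℕ) : ℝ) = ((k : ℝ) + 3) := by rw [hN]; norm_num
  linear_combination (G3 - G1) + lam * (G4 - G2) - f (k + 2) * hQQ1 - e (k + 1) * hQQ2
    + G6 + δ N * G7 + ε N * G8 + lam * ((N : ℕ) : ℝ) * G5
end
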